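/- Equivariant CSP implies equivariant BPIT: let G be a topological group, and assume the following CSP principle holds for G: for every index type ι, arities n : ι → ℕ, every set V with a G-action whose point stabilizers are open and with G-invariant relations R_V i ⊆ V^(n i), and every finite set D with relations R_D i ⊆ D^(n i), if for every finite s ⊆ V there is a function f₀ : V → D preserving all constraints among tuples with coordinates in s, then there is a G-equivariant homomorphism from (V, R_V) to (D, R_D). Then every nontrivial G-Boolean algebra B admits a G-invariant prime ideal. -/

import Mathlib

theorem stmt_10 {G : Type u} {B : Type v}
    [Group G] [TopologicalSpace G] [IsTopologicalGroup G]
    (hcsp : ∀ (ι V D : Type v) (n : ι → ℕ) [MulAction G V] [Finite D]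
      (RV : ∀ i, (Fin (n i) → V) → Prop) (RD : ∀ i, (Fin (n i) → D) → Prop),
      (∀ v : V, IsOpen {g : G | g • v = v}) →
      (∀ i (x : Fin (n i) → V) (g : G), RV i x → RV i (fun k => g • x k)) →
      (∀ s : Finset V, ∃ f₀ : V → D, ∀ i (x : Fin (n i) → V),
        (∀ k, x k ∈ s) → RV i x → RD i (f₀ ∘ x)) →
      ∃ h : V → D, (∀ i (x : Fin (n i) → V), RV i x → RD i (h ∘ x)) ∧
        ∀ (g : G) (v : V), h (g • v) = h v)
    [BooleanAlgebra B] [MulAction G B]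
    (hinf : ∀ (g : G) (a b : B), g • (a ⊓ b) = g • a ⊓ g • b)
    (hcompl : ∀ (g : G) (a : B), g • aᶜ = (g • a)ᶜ)
    (hstab : ∀ b : B, IsOpen {g : G | g • b = b})
    (hnt : (⊥ : B) ≠ ⊤) :
    ∃ I : Set B, (∀ a b : B, a ≤ b → b ∈ I → a ∈ I) ∧
      (∀ a b : B, a ∈ I → b ∈ I → a ⊔ b ∈ I) ∧ I ≠ Set.univ ∧
      (∀ b : B, b ∈ I ∨ bᶜ ∈ I) ∧ (∀ (g : G) (b : B), b ∈ I ↔ g • b ∈ I) := by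
  classical
  -- basic equivariance facts
  have hbot : ∀ g : G, g • (⊥ : B) = ⊥ := by
    intro g
    have := hinf g ⊥ ⊥ᶜ
    rw [inf_compl_eq_bot, hcompl, inf_compl_eq_bot] at this
    exact this
  have htop : ∀ g : G, g • (⊤ : B) = ⊤ := by
    intro g
    have : g • ((⊥ : B)ᶜ) = (g • (⊥ : B))ᶜ := hcompl g ⊥
    rw [hbot, compl_bot] at this
    exact this
  have hle : ∀ (g : G) (a b : B), a ≤ b → g • a ≤ g • b := by
    intro g a b hab
    have h1 : a ⊓ b = a := inf_eq_left.2 hab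
    have h2 : g • a ⊓ g • b = g • a := by rw [← hinf, h1]
    exact inf_eq_left.1 h2
  have hsup : ∀ (g : G) (a b : B), g • (a ⊔ b) = g • a ⊔ g • b := by
    intro g a b
    have h1 : a ⊔ b = (aᶜ ⊓ bᶜ)ᶜ := by rw [compl_inf, compl_compl, compl_compl]
    rw [h1, hcompl, hinf, hcompl, hcompl, compl_inf, compl_compl, compl_compl]
  -- the CSP instance
  set RV : ULift.{v} (Fin 4) → (Fin 3 → B) → Prop := fun i =>
    ![fun x => x 0 ≤ x 1, fun x => x 2 = x 0 ⊔ x 1,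
      fun x => x 0 = ⊤, fun x => x 1 = (x 0)ᶜ] i.down with hRV
  set RD : ULift.{v} (Fin 4) → (Fin 3 → ULift.{v} Bool) → Prop := fun i =>
    ![fun y => y 1 = ⟨true⟩ → y 0 = ⟨true⟩,
      fun y => y 0 = ⟨true⟩ → y 1 = ⟨true⟩ → y 2 = ⟨true⟩,
      fun y => y 0 = ⟨false⟩,
      fun y => y 0 = ⟨true⟩ ∨ y 1 = ⟨true⟩] i.down with hRD
  have hNT : Nontrivial (AsBoolRing B) := by
    refine ⟨toBoolRing ⊥, toBoolRing ⊤, ?_⟩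
    exact fun h => hnt (toBoolRing.injective h)
  obtain ⟨M, hM⟩ := @Ideal.exists_maximal (AsBoolRing B) _ hNT
  have hMp : M.IsPrime := hM.isPrime
  have hinv : ∀ (i : ULift.{v} (Fin 4)) (x : Fin 3 → B) (g : G), RV i x → RV i (fun k => g • x k) := by
    intro i x g hx
    rcases i with ⟨i⟩
    fin_cases i
    · exact hle g _ _ (hx : x 0 ≤ x 1)
    · show g • x 2 = g • x 0 ⊔ g • x 1
      rw [show x 2 = x 0 ⊔ x 1 from hx]; exact hsup g _ _
    · show g • x 0 = ⊤
      rw [show x 0 = ⊤ from hx]; exact htop g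
    · show g • x 1 = (g • x 0)ᶜ
      rw [show x 1 = (x 0)ᶜ from hx]; exact hcompl g _
  have hsat : ∀ s : Finset B, ∃ f₀ : B → ULift.{v} Bool, ∀ (i : ULift.{v} (Fin 4)) (x : Fin 3 → B), (∀ k, x k ∈ s) → RV i x → RD i (f₀ ∘ x) := by
    intro s
    refine ⟨fun b => ⟨decide (toBoolRing b ∈ M)⟩, ?_⟩
    intro i x _ hx
    rcases i with ⟨i⟩
    fin_cases i <;> simp only [hRV, hRD, Matrix.cons_val_zero, Matrix.cons_val_one,
      Matrix.head_cons, Matrix.cons_val_two, Matrix.tail_cons, Function.comp] at hx ⊢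
    · -- downward closed
      intro hx1
      have h1 : toBoolRing (x 1) ∈ M := by simpa using congrArg ULift.down hx1
      have h0 : x 0 ⊓ x 1 = x 0 := inf_eq_left.2 hx
      have : toBoolRing (x 0) ∈ M := by
        have := Ideal.mul_mem_left M (toBoolRing (x 0)) h1
        rwa [← toBoolRing_inf, h0] at this
      simp [this]
    · -- closed under joins
      intro hx0 hx1
      have h0 : toBoolRing (x 0) ∈ M := by simpa using congrArg ULift.down hx0
      have h1 : toBoolRing (x 1) ∈ M := by simpa using congrArg ULift.down hx1
      have h2 : toBoolRing (x 2) ∈ M := by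
        rw [hx, ← symmDiff_symmDiff_inf, toBoolRing_symmDiff, toBoolRing_symmDiff,
          toBoolRing_inf]
        exact M.add_mem (M.add_mem h0 h1) (M.mul_mem_left _ h1)
      simp [h2]
    · -- proper
      have : toBoolRing (x 0) ∉ M := by
        rw [hx, toBoolRing_top]
        exact hM.ne_top ∘ (Ideal.eq_top_iff_one M).2
      simp [this]
    · -- prime
      have h0 : toBoolRing (x 0) * toBoolRing (x 1) ∈ M := by
        rw [← toBoolRing_inf, hx, inf_compl_eq_bot, toBoolRing_bot]
        exact M.zero_mem
      rcases hMp.mem_or_mem h0 with h | h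
      · left; simp [h]
      · right; simp [h]
  obtain ⟨h, hhom, hequiv⟩ := hcsp (ULift (Fin 4)) B (ULift Bool) (fun _ => 3)
    RV RD hstab hinv hsat
  refine ⟨{b | h b = ⟨true⟩}, ?_, ?_, ?_, ?_, ?_⟩
  · intro a b hab hb
    have := hhom ⟨0⟩ ![a, b, ⊥] (by simp [hRV, hab])
    simp only [hRD, Matrix.cons_val_zero, Matrix.cons_val_one, Matrix.head_cons,
      Function.comp] at this
    exact this hb
  · intro a b ha hb
    have := hhom ⟨1⟩ ![a, b, a ⊔ b] (by simp [hRV])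
    simp only [hRD, Matrix.cons_val_zero, Matrix.cons_val_one, Matrix.head_cons,
      Matrix.cons_val_two, Matrix.tail_cons, Function.comp] at this
    exact this ha hb
  · intro hI
    have := hhom ⟨2⟩ ![⊤, ⊥, ⊥] (by simp [hRV])
    simp only [hRD, Matrix.cons_val_zero, Matrix.cons_val_one, Matrix.head_cons,
      Matrix.cons_val_two, Matrix.tail_cons, Function.comp] at this
    have h2 : h ⊤ = ⟨true⟩ := by
      have hm : (⊤ : B) ∈ {b | h b = (⟨true⟩ : ULift Bool)} := by rw [hI]; trivial
      exact hm
    rw [h2] at this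
    exact Bool.noConfusion (congrArg ULift.down this)
  · intro b
    have := hhom ⟨3⟩ ![b, bᶜ, ⊥] (by simp [hRV])
    simp only [hRD, Matrix.cons_val_zero, Matrix.cons_val_one, Matrix.head_cons,
      Function.comp] at this
    exact this
  · intro g b
    constructor
    · intro hb; show h (g • b) = ⟨true⟩; rw [hequiv g b]; exact hb
    · intro hb; have : h (g • b) = ⟨true⟩ := hb; rwa [hequiv g b] at this
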